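/- In W(A_n), every full fully commutative element u (one with σ_1, σ_n ∈ Supp(u)) for which u ≠ σ_n σ_{n−1} ⋯ σ_2 σ_1 has a reduced expression of the form u = σ_i ⋯ σ_2 σ_1 · σ_r ⋯ σ_{n−1} σ_n · x, where 1 ≤ i ≤ n−1, 1 ≤ r ≤ n, i < r, and x is either the identity or has Supp(x) ⊆ {σ_2,…,σ_{n−1}}. -/

import Mathlib

open CoxeterSystem Fin.NatCast

def CommMove {B : Type*} (M : CoxeterMatrix B) (ω₁ ω₂ : List B) : Prop :=
  ∃ (l r : List B) (s t : B), M s t = 2 ∧ ω₁ = l ++ s :: t :: r ∧ ω₂ = l ++ t :: s :: r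

def CommEquiv {B : Type*} (M : CoxeterMatrix B) : List B → List B → Prop :=
  Relation.ReflTransGen (CommMove M)

def IsRedexOf {B W : Type*} [Group W] {M : CoxeterMatrix B} (cs : CoxeterSystem M W)
    (ω : List B) (w : W) : Prop :=
  cs.wordProd ω = w ∧ cs.IsReduced ω

def IsFC {B W : Type*} [Group W] {M : CoxeterMatrix B} (cs : CoxeterSystem M W) (w : W) : Prop :=
  ∀ ω₁ ω₂, IsRedexOf cs ω₁ w → IsRedexOf cs ω₂ w → CommEquiv M ω₁ ω₂


/-- The decreasing word `[i, i-1, ..., j]` of (1-based) generator subscripts. -/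
def decW (i j : ℕ) : List ℕ := (List.range' j (i + 1 - j)).reverse

/-- The increasing word `[i, i+1, ..., j]` of (1-based) generator subscripts. -/
def incW (i j : ℕ) : List ℕ := List.range' i (j + 1 - i)

namespace FullFCAux

variable {B : Type*} {M : CoxeterMatrix B}

theorem commMove_symm {ω₁ ω₂ : List B} (h : CommMove M ω₁ ω₂) : CommMove M ω₂ ω₁ := by
  obtain ⟨l, r, s, t, h2, e1, e2⟩ := h
  exact ⟨l, r, t, s, by rw [M.symmetric t s]; exact h2, e2, e1⟩

theorem commEquiv_symm {ω₁ ω₂ : List B} (h : CommEquiv M ω₁ ω₂) : CommEquiv M ω₂ ω₁ :=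
  Std.Symm.symm (self := @Relation.ReflTransGen.stdSymm _ _ ⟨fun _ _ => commMove_symm⟩) _ _ h

theorem commEquiv_trans {ω₁ ω₂ ω₃ : List B} (h : CommEquiv M ω₁ ω₂) (h' : CommEquiv M ω₂ ω₃) :
    CommEquiv M ω₁ ω₃ := Relation.ReflTransGen.trans h h'

theorem commEquiv_refl (ω : List B) : CommEquiv M ω ω := Relation.ReflTransGen.refl

theorem commMove_perm {ω₁ ω₂ : List B} (h : CommMove M ω₁ ω₂) : ω₁.Perm ω₂ := by
  obtain ⟨l, r, s, t, _, e1, e2⟩ := h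
  subst e1; subst e2
  exact List.Perm.append_left l ((List.Perm.swap t s r))

theorem commEquiv_perm {ω₁ ω₂ : List B} (h : CommEquiv M ω₁ ω₂) : ω₁.Perm ω₂ := by
  induction h with
  | refl => exact List.Perm.refl _
  | tail _ hmv ih => exact ih.trans (commMove_perm hmv)

theorem commEquiv_swap (l r : List B) {s t : B} (h2 : M s t = 2) :
    CommEquiv M (l ++ s :: t :: r) (l ++ t :: s :: r) :=
  Relation.ReflTransGen.single ⟨l, r, s, t, h2, rfl, rfl⟩

variable {W : Type*} [Group W] (cs : CoxeterSystem M W)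

theorem simple_comm {s t : B} (h2 : M s t = 2) :
    cs.simple s * cs.simple t = cs.simple t * cs.simple s := by
  have h := cs.simple_mul_simple_pow s t
  rw [h2, pow_two] at h
  have h1 : cs.simple s * cs.simple t = (cs.simple s * cs.simple t)⁻¹ :=
    eq_inv_of_mul_eq_one_left h
  rw [mul_inv_rev, cs.inv_simple, cs.inv_simple] at h1
  exact h1

theorem simple_braid {s t : B} (h3 : M s t = 3) :
    cs.simple s * cs.simple t * cs.simple s = cs.simple t * cs.simple s * cs.simple t := by
  have h := cs.simple_mul_simple_pow s t
  rw [h3] at h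
  have h' : cs.simple s * cs.simple t * cs.simple s * (cs.simple t * cs.simple s * cs.simple t)
      = 1 := by
    have : (cs.simple s * cs.simple t) ^ 3
        = cs.simple s * cs.simple t * cs.simple s * (cs.simple t * cs.simple s * cs.simple t) := by
      rw [pow_succ, pow_two]; group
    rw [← this]; exact h
  calc cs.simple s * cs.simple t * cs.simple s
      = (cs.simple t * cs.simple s * cs.simple t)⁻¹ := eq_inv_of_mul_eq_one_left (by
        exact h')
    _ = cs.simple t * cs.simple s * cs.simple t := by
        simp [mul_inv_rev, mul_assoc]

theorem commMove_wordProd {ω₁ ω₂ : List B} (h : CommMove M ω₁ ω₂) :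
    cs.wordProd ω₁ = cs.wordProd ω₂ := by
  obtain ⟨l, r, s, t, h2, e1, e2⟩ := h
  subst e1; subst e2
  simp only [cs.wordProd_append, cs.wordProd_cons]
  rw [← mul_assoc (cs.simple s), simple_comm cs h2, mul_assoc]

theorem commEquiv_wordProd {ω₁ ω₂ : List B} (h : CommEquiv M ω₁ ω₂) :
    cs.wordProd ω₁ = cs.wordProd ω₂ := by
  induction h with
  | refl => rfl
  | tail _ hmv ih => exact ih.trans (commMove_wordProd cs hmv)

theorem commEquiv_redex {ω₁ ω₂ : List B} {u : W} (hr : IsRedexOf cs ω₁ u)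
    (h : CommEquiv M ω₁ ω₂) : IsRedexOf cs ω₂ u := by
  obtain ⟨hp, hred⟩ := hr
  have hlen : ω₁.length = ω₂.length := (commEquiv_perm h).length_eq
  have hprod := commEquiv_wordProd cs h
  exact ⟨hprod ▸ hp, by unfold CoxeterSystem.IsReduced at hred ⊢; rw [← hprod, ← hlen]; exact hred⟩

theorem no_square {u : W} {l r : List B} {a : B}
    (hr : IsRedexOf cs (l ++ a :: a :: r) u) : False := by
  obtain ⟨_, hred⟩ := hr
  have h1 : cs.wordProd (l ++ a :: a :: r) = cs.wordProd (l ++ r) := by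
    simp [cs.wordProd_append, cs.wordProd_cons, ← mul_assoc]
  have h2 := cs.length_wordProd_le (l ++ r)
  rw [← h1] at h2
  unfold CoxeterSystem.IsReduced at hred
  rw [hred] at h2
  simp at h2

/-- Pushing a letter `a` rightwards past a block `D` of letters which all commute with it. -/
theorem commEquiv_push {a : B} {D : List B} (h : ∀ c ∈ D, M a c = 2) (l r : List B) :
    CommEquiv M (l ++ a :: (D ++ r)) (l ++ D ++ a :: r) := by
  induction D generalizing l with
  | nil => simp [commEquiv_refl]
  | cons c D' ih =>
    have step : CommEquiv M (l ++ a :: c :: (D' ++ r)) (l ++ c :: a :: (D' ++ r)) :=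
      commEquiv_swap l (D' ++ r) (h c (by simp))
    have ih' := ih (h := fun d hd => h d (by simp [hd])) (l ++ [c])
    simp only [List.append_assoc, List.cons_append, List.nil_append] at ih' ⊢
    exact commEquiv_trans step (by simpa using ih')

theorem commEquiv_pull {a : B} {D : List B} (h : ∀ c ∈ D, M a c = 2) (l r : List B) :
    CommEquiv M (l ++ D ++ a :: r) (l ++ a :: (D ++ r)) :=
  commEquiv_symm (commEquiv_push h l r)

/-- If `u` has a reduced word comm-equivalent to one containing `a ⟨commuting block⟩ a`,
contradiction. -/
theorem square_interval {u : W} {ω : List B} (hr : IsRedexOf cs ω u)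
    {l D r : List B} {a : B} (hc : CommEquiv M ω (l ++ a :: (D ++ a :: r)))
    (h : ∀ c ∈ D, M a c = 2) : False := by
  have h2 : CommEquiv M ω (l ++ D ++ a :: a :: r) :=
    commEquiv_trans hc (commEquiv_push h l (a :: r))
  have h3 := commEquiv_redex cs hr h2
  exact no_square cs (l := l ++ D) (by simpa using h3)

theorem fc_no_braid [DecidableEq B] {u : W} {ω l r : List B} {a b : B} (hu : IsFC cs u)
    (hr : IsRedexOf cs ω u) (hc : CommEquiv M ω (l ++ a :: b :: a :: r)) (h3 : M a b = 3) :
    False := by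
  have hab : a ≠ b := fun h => by rw [h, M.diagonal] at h3; omega
  have hr1 : IsRedexOf cs (l ++ a :: b :: a :: r) u := commEquiv_redex cs hr hc
  have key : cs.wordProd [a, b, a] = cs.wordProd [b, a, b] := by
    simp only [cs.wordProd_cons, cs.wordProd_nil, mul_one, ← mul_assoc]
    exact simple_braid cs h3
  have hprod : cs.wordProd (l ++ a :: b :: a :: r) = cs.wordProd (l ++ b :: a :: b :: r) := by
    have e1 : l ++ a :: b :: a :: r = (l ++ [a, b, a]) ++ r := by simp
    have e2 : l ++ b :: a :: b :: r = (l ++ [b, a, b]) ++ r := by simp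
    rw [e1, e2, cs.wordProd_append, cs.wordProd_append, cs.wordProd_append, cs.wordProd_append,
      key]
  have hr2 : IsRedexOf cs (l ++ b :: a :: b :: r) u := by
    obtain ⟨hp, hred⟩ := hr1
    refine ⟨hprod ▸ hp, ?_⟩
    unfold CoxeterSystem.IsReduced at hred ⊢
    rw [← hprod]
    simpa using hred
  have hce := hu _ _ hr1 hr2
  have hcount := (commEquiv_perm hce).count_eq a
  simp [List.count_append, List.count_cons, hab, Ne.symm hab] at hcount

theorem braid_interval [DecidableEq B] {u : W} {ω : List B} (hu : IsFC cs u)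
    (hr : IsRedexOf cs ω u) {l D₁ D₂ r : List B} {a b : B}
    (hc : CommEquiv M ω (l ++ a :: (D₁ ++ b :: D₂ ++ a :: r))) (h3 : M a b = 3)
    (h1 : ∀ c ∈ D₁, M a c = 2) (h2 : ∀ c ∈ D₂, M a c = 2) : False := by
  have s1 : CommEquiv M (l ++ a :: (D₁ ++ b :: D₂ ++ a :: r))
      (l ++ D₁ ++ a :: (b :: (D₂ ++ a :: r))) := by
    have := commEquiv_push (h := h1) l (b :: (D₂ ++ a :: r))
    simp only [List.append_assoc, List.cons_append, List.nil_append] at this ⊢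
    exact this
  have s2 : CommEquiv M (l ++ D₁ ++ a :: (b :: (D₂ ++ a :: r)))
      ((l ++ D₁) ++ a :: b :: a :: (D₂ ++ r)) := by
    have := commEquiv_pull (h := h2) (l ++ D₁ ++ [a, b]) r
    simp only [List.append_assoc, List.cons_append, List.nil_append] at this ⊢
    exact this
  exact fc_no_braid cs hu hr (commEquiv_trans hc (commEquiv_trans s1 s2)) h3

variable {n : ℕ} [NeZero n]

theorem An_two {c d : Fin n} (h : (c:ℕ) + 2 ≤ (d:ℕ) ∨ (d:ℕ) + 2 ≤ (c:ℕ)) :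
    CoxeterMatrix.Aₙ n c d = 2 := by
  have hne : c ≠ d := by
    intro e; subst e; omega
  have h1 : ¬((d:ℕ) + 1 = (c:ℕ) ∨ (c:ℕ) + 1 = (d:ℕ)) := by omega
  show (CoxeterMatrix.Aₙ n).M c d = 2
  simp only [CoxeterMatrix.Aₙ, CoxeterMatrix.A, Matrix.of_apply, if_neg hne, if_neg h1]

theorem An_three {c d : Fin n} (h : (c:ℕ) + 1 = (d:ℕ) ∨ (d:ℕ) + 1 = (c:ℕ)) :
    CoxeterMatrix.Aₙ n c d = 3 := by
  have hne : c ≠ d := by intro e; subst e; omega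
  have h1 : ((d:ℕ) + 1 = (c:ℕ) ∨ (c:ℕ) + 1 = (d:ℕ)) := by omega
  show (CoxeterMatrix.Aₙ n).M c d = 3
  simp only [CoxeterMatrix.Aₙ, CoxeterMatrix.A, Matrix.of_apply, if_neg hne, if_pos h1]

theorem first_occ {α : Type*} {a : α} {ω : List α} (h : a ∈ ω) :
    ∃ l r, ω = l ++ a :: r ∧ a ∉ l := by
  induction ω with
  | nil => simp at h
  | cons b t ih =>
    by_cases hb : b = a
    · exact ⟨[], t, by simp [hb], by simp⟩
    · have h' : a ∈ t := by
        rcases List.mem_cons.mp h with h | h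
        · exact absurd h.symm hb
        · exact h
      obtain ⟨l, r, e, hl⟩ := ih h'
      exact ⟨b :: l, r, by simp [e], by
        simp only [List.mem_cons, not_or]
        exact ⟨fun e => hb e.symm, hl⟩⟩

/-- `[s, s+1, ..., s+len-1]` as elements of `Fin n`. -/
def seg (n : ℕ) [NeZero n] (s len : ℕ) : List (Fin n) := (List.range' s len).map (Nat.cast)

theorem seg_cons (s len : ℕ) : seg n s (len + 1) = (s : Fin n) :: seg n (s+1) len := by
  simp [seg, List.range'_succ]

theorem seg_concat (s len : ℕ) : seg n s (len + 1) = seg n s len ++ [((s + len : ℕ) : Fin n)] := by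
  simp [seg, List.range'_concat]

theorem seg_append (s m k : ℕ) : seg n s m ++ seg n (s + m) k = seg n s (m + k) := by
  have h := List.range'_append (s := s) (m := m) (n := k) (step := 1)
  simp only [one_mul] at h
  simp only [seg, ← List.map_append, h]

theorem mem_seg {s len : ℕ} (hlt : s + len ≤ n) {c : Fin n} (hc : c ∈ seg n s len) :
    s ≤ (c:ℕ) ∧ (c:ℕ) < s + len := by
  simp only [seg, List.mem_map, List.mem_range'_1] at hc
  obtain ⟨k, ⟨hk1, hk2⟩, rfl⟩ := hc
  rw [Fin.val_cast_of_lt (by omega)]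
  exact ⟨hk1, hk2⟩

/-- `[a, a-1, ..., 1, 0]` in `Fin n`. -/
def DW (n : ℕ) [NeZero n] (a : ℕ) : List (Fin n) := (seg n 0 (a+1)).reverse

theorem DW_head (a : ℕ) : DW n a = ((a : ℕ) : Fin n) :: (seg n 0 a).reverse := by
  rw [DW, seg_concat]; simp

theorem DW_succ (a : ℕ) : DW n (a+1) = ((a + 1 : ℕ) : Fin n) :: DW n a := DW_head (a+1)

theorem mem_DW_val {a : ℕ} (ha : a < n) {c : Fin n} (hc : c ∈ DW n a) : (c:ℕ) ≤ a := by
  rw [DW, List.mem_reverse] at hc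
  have := mem_seg (by omega) hc
  omega

theorem DW_split {e a : ℕ} (he : e ≤ a) :
    DW n a = (seg n (e+1) (a-e)).reverse ++ (((e : ℕ) : Fin n) :: (seg n 0 e).reverse) := by
  rw [DW, show a + 1 = (e+1) + (a-e) by omega, ← seg_append]
  rw [List.reverse_append]
  congr 1
  rw [show (0:ℕ) + (e+1) = e + 1 by omega]
  exact DW_head e

/-- `[b, b+1, ..., n-1]` in `Fin n`. -/
def IW (n : ℕ) [NeZero n] (b : ℕ) : List (Fin n) := seg n b (n - b)

theorem map_sub_one_range' (len : ℕ) : ∀ s, (List.range' (s+1) len).map (fun k => k - 1)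
    = List.range' s len := by
  induction len with
  | zero => intro s; simp
  | succ len ih =>
    intro s
    rw [List.range'_succ, List.range'_succ]
    simp only [List.map_cons, Nat.add_sub_cancel]
    rw [ih (s+1)]


end FullFCAux


namespace FullFCAux

open CoxeterSystem

variable {n : ℕ} [NeZero n] {W : Type*} [Group W] {cs : CoxeterSystem (CoxeterMatrix.Aₙ n) W}
  {u : W} {ω : List (Fin n)}

theorem no_up (hu : IsFC cs u) (hr : IsRedexOf cs ω u) :
    ∀ (d : ℕ) (l D r : List (Fin n)) (a : Fin n), (a:ℕ) + d = n - 1 →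
      CommEquiv (CoxeterMatrix.Aₙ n) ω (l ++ a :: (D ++ a :: r)) →
      (∀ c ∈ D, (a:ℕ) < (c:ℕ)) → False := by
  intro d
  induction d with
  | zero =>
    intro l D r a ha hc hD
    refine square_interval cs hr hc (fun c hcD => ?_)
    have h1 := hD c hcD
    have h2 := c.isLt
    have h3 := a.isLt
    exact absurd rfl (by omega : ¬ (0:ℕ) = 0)
  | succ d ih =>
    intro l D r a ha hc hD
    have han : (a:ℕ) + 1 < n := by have := a.isLt; omega
    set a' := (((a:ℕ)+1 : ℕ) : Fin n) with ha'def
    have ha'v : (a' : ℕ) = (a:ℕ) + 1 := Fin.val_cast_of_lt han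
    have hgap : ∀ c ∈ D, c ≠ a' → (a:ℕ) + 2 ≤ (c:ℕ) := by
      intro c hcD hne
      have h1 := hD c hcD
      have h2 : (c:ℕ) ≠ (a:ℕ)+1 := by
        intro e
        exact hne (Fin.val_injective (by rw [ha'v]; exact e))
      omega
    by_cases hmem : a' ∈ D
    · obtain ⟨D₁, D₂, e1, hn1⟩ := first_occ hmem
      by_cases hmem2 : a' ∈ D₂
      · obtain ⟨E₁, E₂, e2, hn2⟩ := first_occ hmem2
        refine ih (l ++ a :: D₁) E₁ (E₂ ++ a :: r) a' (by omega) ?_ ?_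
        · rw [e1, e2] at hc
          simpa [List.append_assoc, List.cons_append] using hc
        · intro c hcE
          have hcD : c ∈ D := by rw [e1, e2]; simp [hcE]
          have := hgap c hcD (fun h => hn2 (h ▸ hcE))
          omega
      · refine braid_interval cs hu hr (l := l) (D₁ := D₁) (D₂ := D₂) (r := r)
          (a := a) (b := a') ?_ ?_ ?_ ?_
        · rw [e1] at hc
          simpa [List.append_assoc, List.cons_append] using hc
        · exact An_three (Or.inl (by omega))
        · intro c hcD
          exact An_two (Or.inl (hgap c (by rw [e1]; simp [hcD]) (fun h => hn1 (h ▸ hcD))))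
        · intro c hcD
          exact An_two (Or.inl (hgap c (by rw [e1]; simp [hcD]) (fun h => hmem2 (h ▸ hcD))))
    · refine square_interval cs hr hc (fun c hcD =>
        An_two (Or.inl (hgap c hcD (fun h => hmem (h ▸ hcD)))))

theorem no_down (hu : IsFC cs u) (hr : IsRedexOf cs ω u) :
    ∀ (d : ℕ) (l D r : List (Fin n)) (a : Fin n), (a:ℕ) = d →
      CommEquiv (CoxeterMatrix.Aₙ n) ω (l ++ a :: (D ++ a :: r)) →
      (∀ c ∈ D, (c:ℕ) < (a:ℕ)) → False := by
  intro d
  induction d with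
  | zero =>
    intro l D r a ha hc hD
    refine square_interval cs hr hc (fun c hcD => ?_)
    have h1 := hD c hcD
    exact absurd rfl (by omega : ¬ (0:ℕ) = 0)
  | succ d ih =>
    intro l D r a ha hc hD
    have hdn : d < n := by have := a.isLt; omega
    set a' := ((d : ℕ) : Fin n) with ha'def
    have ha'v : (a' : ℕ) = d := Fin.val_cast_of_lt hdn
    have hgap : ∀ c ∈ D, c ≠ a' → (c:ℕ) + 2 ≤ (a:ℕ) := by
      intro c hcD hne
      have h1 := hD c hcD
      have h2 : (c:ℕ) ≠ d := by
        intro e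
        exact hne (Fin.val_injective (by rw [ha'v]; exact e))
      omega
    by_cases hmem : a' ∈ D
    · obtain ⟨D₁, D₂, e1, hn1⟩ := first_occ hmem
      by_cases hmem2 : a' ∈ D₂
      · obtain ⟨E₁, E₂, e2, hn2⟩ := first_occ hmem2
        refine ih (l ++ a :: D₁) E₁ (E₂ ++ a :: r) a' (by omega) ?_ ?_
        · rw [e1, e2] at hc
          simpa [List.append_assoc, List.cons_append] using hc
        · intro c hcE
          have hcD : c ∈ D := by rw [e1, e2]; simp [hcE]
          have := hgap c hcD (fun h => hn2 (h ▸ hcE))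
          omega
      · refine braid_interval cs hu hr (l := l) (D₁ := D₁) (D₂ := D₂) (r := r)
          (a := a) (b := a') ?_ ?_ ?_ ?_
        · rw [e1] at hc
          simpa [List.append_assoc, List.cons_append] using hc
        · exact An_three (Or.inr (by omega))
        · intro c hcD
          exact An_two (Or.inr (hgap c (by rw [e1]; simp [hcD]) (fun h => hn1 (h ▸ hcD))))
        · intro c hcD
          exact An_two (Or.inr (hgap c (by rw [e1]; simp [hcD]) (fun h => hmem2 (h ▸ hcD))))
    · refine square_interval cs hr hc (fun c hcD =>
        An_two (Or.inr (hgap c hcD (fun h => hmem (h ▸ hcD)))))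

theorem once_zero (hu : IsFC cs u) (hr : IsRedexOf cs ω u) {l D r : List (Fin n)}
    (hc : CommEquiv (CoxeterMatrix.Aₙ n) ω
      (l ++ ((0:ℕ):Fin n) :: (D ++ ((0:ℕ):Fin n) :: r))) : False := by
  have hz : ((((0:ℕ):Fin n)) : ℕ) = 0 := Fin.val_cast_of_lt (Nat.pos_of_ne_zero (NeZero.ne n))
  have key : ∀ c : Fin n, c ≠ ((0:ℕ):Fin n) → ((((0:ℕ):Fin n)):ℕ) < (c:ℕ) := by
    intro c hne
    rcases Nat.eq_zero_or_pos (c:ℕ) with h | h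
    · exact absurd (Fin.val_injective (by rw [hz, h])) hne
    · omega
  by_cases hmem : ((0:ℕ):Fin n) ∈ D
  · obtain ⟨E₁, E₂, e, hn⟩ := first_occ hmem
    rw [e] at hc
    refine no_up hu hr (n-1) l E₁ (E₂ ++ ((0:ℕ):Fin n) :: r) _ (by rw [hz]; omega)
      (by simpa [List.append_assoc, List.cons_append] using hc) ?_
    intro c hcE
    exact key c (fun h => hn (h ▸ hcE))
  · exact no_up hu hr (n-1) l D r _ (by rw [hz]; omega) hc (fun c hcD => key c (fun h => hmem (h ▸ hcD)))

theorem once_lst (hu : IsFC cs u) (hr : IsRedexOf cs ω u) {l D r : List (Fin n)}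
    (hc : CommEquiv (CoxeterMatrix.Aₙ n) ω
      (l ++ ((n-1:ℕ):Fin n) :: (D ++ ((n-1:ℕ):Fin n) :: r))) : False := by
  have hz : ((((n-1:ℕ):Fin n)) : ℕ) = n - 1 := Fin.val_cast_of_lt (by
    have := Nat.pos_of_ne_zero (NeZero.ne n); omega)
  have key : ∀ c : Fin n, c ≠ ((n-1:ℕ):Fin n) → (c:ℕ) < ((((n-1:ℕ):Fin n)):ℕ) := by
    intro c hne
    have h2 := c.isLt
    rcases Nat.lt_or_ge (c:ℕ) (n-1) with h | h
    · omega
    · exact absurd (Fin.val_injective (by rw [hz]; omega)) hne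
  by_cases hmem : ((n-1:ℕ):Fin n) ∈ D
  · obtain ⟨E₁, E₂, e, hn⟩ := first_occ hmem
    rw [e] at hc
    refine no_down hu hr (n-1) l E₁ (E₂ ++ ((n-1:ℕ):Fin n) :: r) _ hz
      (by simpa [List.append_assoc, List.cons_append] using hc) ?_
    intro c hcE
    exact key c (fun h => hn (h ▸ hcE))
  · exact no_down hu hr (n-1) l D r _ hz hc (fun c hcD => key c (fun h => hmem (h ▸ hcD)))

end FullFCAux

namespace FullFCAux

open CoxeterSystem

variable {n : ℕ} [NeZero n] {W : Type*} [Group W] {cs : CoxeterSystem (CoxeterMatrix.Aₙ n) W}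
  {u : W} {ω : List (Fin n)}

theorem DW_zero : DW n 0 = [((0:ℕ):Fin n)] := rfl

theorem normC (hu : IsFC cs u) (hr : IsRedexOf cs ω u) (h0 : ((0:ℕ):Fin n) ∈ ω) :
    ∃ (a : ℕ) (Q : List (Fin n)), a < n ∧
      CommEquiv (CoxeterMatrix.Aₙ n) ω (DW n a ++ Q) ∧ ((0:ℕ):Fin n) ∉ Q := by
  have hz : ((((0:ℕ):Fin n)) : ℕ) = 0 := Fin.val_cast_of_lt (Nat.pos_of_ne_zero (NeZero.ne n))
  have claim : ∀ P : List (Fin n), ((0:ℕ):Fin n) ∉ P → ∀ (a : ℕ) (Q : List (Fin n)), a < n →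
      ((0:ℕ):Fin n) ∉ Q → CommEquiv (CoxeterMatrix.Aₙ n) ω (P ++ (DW n a ++ Q)) →
      ∃ (a' : ℕ) (Q' : List (Fin n)), a' < n ∧
        CommEquiv (CoxeterMatrix.Aₙ n) ω (DW n a' ++ Q') ∧ ((0:ℕ):Fin n) ∉ Q' := by
    intro P
    induction P using List.reverseRecOn with
    | nil =>
      intro _ a Q ha hQ hc
      exact ⟨a, Q, ha, by simpa using hc, hQ⟩
    | append_singleton P' c ih =>
      intro hP a Q ha hQ hc
      have hcz : c ≠ ((0:ℕ):Fin n) := fun e => hP (by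
        rw [← e]; exact List.mem_append.mpr (Or.inr (List.mem_singleton.mpr rfl)))
      have hP' : ((0:ℕ):Fin n) ∉ P' := fun e => hP (List.mem_append.mpr (Or.inl e))
      have hcv : 1 ≤ (c:ℕ) := by
        rcases Nat.eq_zero_or_pos (c:ℕ) with h | h
        · exact absurd (Fin.val_injective (by rw [hz, h])) hcz
        · exact h
      rcases lt_trichotomy (c:ℕ) (a+1) with hlt | heq | hgt
      · -- (c:ℕ) ≤ a : contradiction
        exfalso
        have hsplit := DW_split (n := n) (e := (c:ℕ)) (a := a) (by omega)
        have hce : (((c:ℕ):ℕ) : Fin n) = c := Fin.cast_val_eq_self c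
        rw [hsplit, hce] at hc
        rcases Nat.eq_or_lt_of_le (show (c:ℕ) ≤ a by omega) with heqa | hlta
        · refine square_interval cs hr (l := P') (D := (seg n ((c:ℕ)+1) (a-(c:ℕ))).reverse)
            (a := c) (r := (seg n 0 (c:ℕ)).reverse ++ Q) ?_ ?_
          · simpa [List.append_assoc, List.cons_append] using hc
          · intro d hd
            exfalso
            rw [← heqa] at hd
            simp [Nat.sub_self, seg] at hd
        · have hT : seg n ((c:ℕ)+1) (a-(c:ℕ))
              = (((c:ℕ)+1:ℕ) : Fin n) :: seg n ((c:ℕ)+2) (a-(c:ℕ)-1) := by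
            obtain ⟨k, hk⟩ : ∃ k, a - (c:ℕ) = k + 1 := ⟨a - (c:ℕ) - 1, by omega⟩
            conv_lhs => rw [hk, show k = a - (c:ℕ) - 1 by omega, seg_cons]
          rw [hT] at hc
          refine braid_interval cs hu hr (l := P') (D₁ := (seg n ((c:ℕ)+2) (a-(c:ℕ)-1)).reverse)
            (D₂ := []) (r := (seg n 0 (c:ℕ)).reverse ++ Q) (a := c)
            (b := (((c:ℕ)+1:ℕ):Fin n)) ?_ ?_ ?_ (by simp)
          · simpa [List.append_assoc, List.cons_append, List.reverse_cons] using hc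
          · exact An_three (Or.inl (by rw [Fin.val_cast_of_lt (by omega)]))
          · intro d hd
            rw [List.mem_reverse] at hd
            have := mem_seg (by omega) hd
            exact An_two (Or.inl (by omega))
      · -- c = a+1 : extend the decreasing run
        have ha1 : a + 1 < n := by have := c.isLt; omega
        have hceq : c = ((a+1 : ℕ) : Fin n) :=
          Fin.val_injective (by rw [Fin.val_cast_of_lt ha1]; omega)
        refine ih hP' (a+1) Q ha1 hQ ?_
        rw [DW_succ, ← hceq]
        simpa [List.append_assoc, List.cons_append] using hc
      · -- (c:ℕ) ≥ a+2 : push c to the right past DW n a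
        have hcomm : ∀ d ∈ DW n a, (CoxeterMatrix.Aₙ n) c d = 2 := by
          intro d hd
          have := mem_DW_val (by omega) hd
          exact An_two (Or.inr (by omega))
        have hpush := commEquiv_push (M := CoxeterMatrix.Aₙ n) (a := c) (D := DW n a)
          hcomm P' Q
        refine ih hP' a (c :: Q) ha (by simp only [List.mem_cons, not_or]; exact ⟨fun h => hcz h.symm, hQ⟩) ?_
        refine commEquiv_trans ?_ (by simpa [List.append_assoc, List.cons_append] using hpush)
        simpa [List.append_assoc, List.cons_append] using hc
  obtain ⟨P, Q₀, e, hnP⟩ := first_occ h0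
  have hnQ : ((0:ℕ):Fin n) ∉ Q₀ := by
    intro hmem
    obtain ⟨E₁, E₂, e2, hn2⟩ := first_occ hmem
    refine once_zero hu hr (l := P) (D := E₁) (r := E₂) ?_
    rw [show ω = P ++ ((0:ℕ):Fin n) :: (E₁ ++ ((0:ℕ):Fin n) :: E₂) by rw [e, e2]]
    exact commEquiv_refl _
  refine claim P hnP 0 Q₀ (Nat.pos_of_ne_zero (NeZero.ne n)) hnQ ?_
  rw [DW_zero, show P ++ ([((0:ℕ):Fin n)] ++ Q₀) = ω by rw [e]; simp]
  exact commEquiv_refl _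

end FullFCAux

namespace FullFCAux

open CoxeterSystem

variable {n : ℕ} [NeZero n] {W : Type*} [Group W] {cs : CoxeterSystem (CoxeterMatrix.Aₙ n) W}
  {u : W} {ω : List (Fin n)}

theorem val_ge_one {c : Fin n} (hcz : c ≠ ((0:ℕ):Fin n)) : 1 ≤ (c:ℕ) := by
  have hz : ((((0:ℕ):Fin n)) : ℕ) = 0 := Fin.val_cast_of_lt (Nat.pos_of_ne_zero (NeZero.ne n))
  rcases Nat.eq_zero_or_pos (c:ℕ) with h | h
  · exact absurd (Fin.val_injective (by rw [hz, h])) hcz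
  · exact h

theorem val_le_sub_two {c : Fin n} (hcl : c ≠ ((n-1:ℕ):Fin n)) : (c:ℕ) ≤ n - 2 := by
  have hpos := Nat.pos_of_ne_zero (NeZero.ne n)
  have hlv : (((n-1:ℕ):Fin n) : ℕ) = n - 1 := Fin.val_cast_of_lt (by omega)
  have h2 := c.isLt
  rcases Nat.lt_or_ge (c:ℕ) (n-1) with h | h
  · omega
  · exact absurd (Fin.val_injective (by rw [hlv]; omega)) hcl

theorem Qnil (hu : IsFC cs u) (hr : IsRedexOf cs ω u) {Q : List (Fin n)}
    (hc : CommEquiv (CoxeterMatrix.Aₙ n) ω (DW n (n-1) ++ Q))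
    (hQ : ((0:ℕ):Fin n) ∉ Q) : Q = [] := by
  cases Q with
  | nil => rfl
  | cons c Q' =>
    exfalso
    have hpos := Nat.pos_of_ne_zero (NeZero.ne n)
    have hcz : c ≠ ((0:ℕ):Fin n) := fun e => hQ (List.mem_cons.mpr (Or.inl e.symm))
    have hcv : 1 ≤ (c:ℕ) := val_ge_one hcz
    by_cases hcl : (c:ℕ) = n - 1
    · have hc' : c = ((n-1:ℕ):Fin n) :=
        Fin.val_injective (by rw [Fin.val_cast_of_lt (by omega)]; exact hcl)
      rw [DW_head, hc'] at hc
      exact once_lst hu hr (l := []) (D := (seg n 0 (n-1)).reverse) (r := Q')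
        (by simpa [List.cons_append] using hc)
    · have hcle : (c:ℕ) ≤ n - 2 := by have := c.isLt; omega
      have hsplit := DW_split (n := n) (e := (c:ℕ)) (a := n-1) (by omega)
      rw [hsplit, Fin.cast_val_eq_self c] at hc
      have hseg : (seg n 0 (c:ℕ)) = seg n 0 ((c:ℕ)-1) ++ [(((c:ℕ)-1:ℕ) : Fin n)] := by
        obtain ⟨k, hk⟩ : ∃ k, (c:ℕ) = k + 1 := ⟨(c:ℕ) - 1, by omega⟩
        conv_lhs => rw [hk, show k = (c:ℕ) - 1 by omega, seg_concat]
        simp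
      rw [hseg] at hc
      refine braid_interval cs hu hr (l := (seg n ((c:ℕ)+1) (n-1-(c:ℕ))).reverse)
        (D₁ := []) (D₂ := (seg n 0 ((c:ℕ)-1)).reverse) (r := Q') (a := c)
        (b := (((c:ℕ)-1:ℕ):Fin n)) ?_ ?_ (by simp) ?_
      · simpa [List.append_assoc, List.cons_append, List.reverse_append] using hc
      · exact An_three (Or.inr (by rw [Fin.val_cast_of_lt (by omega)]; omega))
      · intro d hd
        rw [List.mem_reverse] at hd
        have := mem_seg (by omega) hd
        exact An_two (Or.inr (by omega))

theorem IW_top : IW n (n-1) = [((n-1:ℕ):Fin n)] := by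
  have hpos := Nat.pos_of_ne_zero (NeZero.ne n)
  rw [IW, show n - (n-1) = 1 by omega]
  rfl

theorem mem_IW_val {b : ℕ} {d : Fin n} (hd : d ∈ IW n b) : b ≤ (d:ℕ) := by
  rw [IW] at hd
  by_cases hbn : b ≤ n
  · exact (mem_seg (by omega) hd).1
  · exfalso
    rw [show n - b = 0 by omega] at hd
    simp [seg] at hd

theorem normE (hu : IsFC cs u) (hr : IsRedexOf cs ω u) {a : ℕ} (ha : a + 1 < n)
    {Q : List (Fin n)} (hc : CommEquiv (CoxeterMatrix.Aₙ n) ω (DW n a ++ Q))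
    (hQ0 : ((0:ℕ):Fin n) ∉ Q) (hlst : ((n-1:ℕ):Fin n) ∈ Q) :
    ∃ (b : ℕ) (x : List (Fin n)), 1 ≤ b ∧ b < n ∧
      CommEquiv (CoxeterMatrix.Aₙ n) ω (DW n a ++ (IW n b ++ x)) ∧
      ((0:ℕ):Fin n) ∉ x ∧ ((n-1:ℕ):Fin n) ∉ x := by
  have hpos := Nat.pos_of_ne_zero (NeZero.ne n)
  obtain ⟨P, x₀, e, hnP⟩ := first_occ hlst
  have hnx : ((n-1:ℕ):Fin n) ∉ x₀ := by
    intro hmem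
    obtain ⟨E₁, E₂, e2, hn2⟩ := first_occ hmem
    refine once_lst hu hr (l := DW n a ++ P) (D := E₁) (r := E₂) ?_
    have heq : DW n a ++ Q
        = (DW n a ++ P) ++ ((n-1:ℕ):Fin n) :: (E₁ ++ ((n-1:ℕ):Fin n) :: E₂) := by
      rw [e, e2]; simp [List.append_assoc]
    rw [← heq]
    exact hc
  have hzP : ((0:ℕ):Fin n) ∉ P := fun h => hQ0 (by
    rw [e]; exact List.mem_append.mpr (Or.inl h))
  have hzx : ((0:ℕ):Fin n) ∉ x₀ := fun h => hQ0 (by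
    rw [e]; exact List.mem_append.mpr (Or.inr (List.mem_cons_of_mem _ h)))
  have claim : ∀ P' : List (Fin n),
      (((0:ℕ):Fin n) ∉ P' ∧ ((n-1:ℕ):Fin n) ∉ P') → ∀ (b : ℕ) (x : List (Fin n)), 1 ≤ b →
      b < n → ((0:ℕ):Fin n) ∉ x → ((n-1:ℕ):Fin n) ∉ x →
      CommEquiv (CoxeterMatrix.Aₙ n) ω (DW n a ++ (P' ++ (IW n b ++ x))) →
      ∃ (b' : ℕ) (x' : List (Fin n)), 1 ≤ b' ∧ b' < n ∧
        CommEquiv (CoxeterMatrix.Aₙ n) ω (DW n a ++ (IW n b' ++ x')) ∧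
        ((0:ℕ):Fin n) ∉ x' ∧ ((n-1:ℕ):Fin n) ∉ x' := by
    intro P'
    induction P' using List.reverseRecOn with
    | nil =>
      intro _ b x hb1 hbn hx0 hxl hc'
      exact ⟨b, x, hb1, hbn, by simpa using hc', hx0, hxl⟩
    | append_singleton P'' c ih =>
      intro hP b x hb1 hbn hx0 hxl hc'
      have hcz : c ≠ ((0:ℕ):Fin n) :=
        fun h => hP.1 (List.mem_append.mpr (Or.inr (List.mem_singleton.mpr h.symm)))
      have hcl : c ≠ ((n-1:ℕ):Fin n) :=
        fun h => hP.2 (List.mem_append.mpr (Or.inr (List.mem_singleton.mpr h.symm)))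
      have hP'' : ((0:ℕ):Fin n) ∉ P'' ∧ ((n-1:ℕ):Fin n) ∉ P'' :=
        ⟨fun h => hP.1 (List.mem_append.mpr (Or.inl h)),
         fun h => hP.2 (List.mem_append.mpr (Or.inl h))⟩
      have hcv : 1 ≤ (c:ℕ) := val_ge_one hcz
      have hcle : (c:ℕ) ≤ n - 2 := val_le_sub_two hcl
      rcases lt_trichotomy ((c:ℕ)+1) b with hlt | heq | hgt
      · -- push c past IW n b into x
        have hcomm : ∀ d ∈ IW n b, (CoxeterMatrix.Aₙ n) c d = 2 := by
          intro d hd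
          have := mem_IW_val hd
          exact An_two (Or.inl (by omega))
        have hpush := commEquiv_push (M := CoxeterMatrix.Aₙ n) (a := c) (D := IW n b)
          hcomm (DW n a ++ P'') x
        refine ih hP'' b (c :: x) hb1 hbn
          (by simp only [List.mem_cons, not_or]; exact ⟨fun h => hcz h.symm, hx0⟩)
          (by simp only [List.mem_cons, not_or]; exact ⟨fun h => hcl h.symm, hxl⟩) ?_
        refine commEquiv_trans ?_ (by simpa [List.append_assoc, List.cons_append] using hpush)
        simpa [List.append_assoc, List.cons_append] using hc'
      · -- c extends the increasing run
        have hceq : c = (((c:ℕ):ℕ) : Fin n) := (Fin.cast_val_eq_self c).symm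
        have hIW : IW n ((c:ℕ)) = c :: IW n b := by
          rw [IW, IW, show n - (c:ℕ) = (n - b) + 1 by omega, seg_cons,
            show (c:ℕ) + 1 = b from heq, ← hceq]
        refine ih hP'' ((c:ℕ)) x hcv (by omega) hx0 hxl ?_
        rw [hIW]
        simpa [List.append_assoc, List.cons_append] using hc'
      · -- (c:ℕ) ≥ b : c occurs inside IW n b, contradiction
        exfalso
        have hba : b ≤ (c:ℕ) := by omega
        have hsplit : IW n b = seg n b ((c:ℕ)-b) ++ (c :: seg n ((c:ℕ)+1) (n-(c:ℕ)-1)) := by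
          have h1 : seg n b ((c:ℕ)-b) ++ seg n (b + ((c:ℕ)-b)) (n - b - ((c:ℕ)-b))
              = seg n b (((c:ℕ)-b) + (n - b - ((c:ℕ)-b))) := seg_append _ _ _
          rw [show b + ((c:ℕ)-b) = (c:ℕ) by omega,
            show ((c:ℕ)-b) + (n - b - ((c:ℕ)-b)) = n - b by omega] at h1
          rw [IW, ← h1]
          congr 1
          obtain ⟨k, hk⟩ : ∃ k, n - b - ((c:ℕ)-b) = k + 1 := ⟨n - (c:ℕ) - 1, by omega⟩
          conv_lhs => rw [hk, show k = n - (c:ℕ) - 1 by omega, seg_cons]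
          rw [Fin.cast_val_eq_self c]
        rw [hsplit] at hc'
        rcases Nat.eq_or_lt_of_le hba with heqb | hltb
        · refine square_interval cs hr (l := DW n a ++ P'') (D := seg n b ((c:ℕ)-b))
            (a := c) (r := seg n ((c:ℕ)+1) (n-(c:ℕ)-1) ++ x) ?_ ?_
          · simpa [List.append_assoc, List.cons_append] using hc'
          · intro d hd
            exfalso
            rw [← heqb] at hd
            simp [Nat.sub_self, seg] at hd
        · have hseg2 : seg n b ((c:ℕ)-b)
              = seg n b ((c:ℕ)-1-b) ++ [(((c:ℕ)-1:ℕ) : Fin n)] := by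
            obtain ⟨k, hk⟩ : ∃ k, (c:ℕ)-b = k + 1 := ⟨(c:ℕ)-1-b, by omega⟩
            conv_lhs => rw [hk, show k = (c:ℕ)-1-b by omega, seg_concat,
              show b + ((c:ℕ)-1-b) = (c:ℕ)-1 by omega]
          rw [hseg2] at hc'
          refine braid_interval cs hu hr (l := DW n a ++ P'')
            (D₁ := seg n b ((c:ℕ)-1-b)) (D₂ := [])
            (r := seg n ((c:ℕ)+1) (n-(c:ℕ)-1) ++ x) (a := c)
            (b := (((c:ℕ)-1:ℕ):Fin n)) ?_ ?_ ?_ (by simp)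
          · simpa [List.append_assoc, List.cons_append] using hc'
          · exact An_three (Or.inr (by rw [Fin.val_cast_of_lt (by omega)]; omega))
          · intro d hd
            have := mem_seg (by omega) hd
            exact An_two (Or.inr (by omega))
  refine claim P ⟨hzP, hnP⟩ (n-1) x₀ (by omega) (by omega) hzx hnx ?_
  rw [IW_top]
  have heq : DW n a ++ (P ++ ([((n-1:ℕ):Fin n)] ++ x₀)) = DW n a ++ Q := by
    rw [e]; simp
  rw [heq]
  exact hc

theorem a_lt_b (hu : IsFC cs u) (hr : IsRedexOf cs ω u) {a b : ℕ} {x : List (Fin n)}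
    (hb1 : 1 ≤ b) (hbn : b < n)
    (hc : CommEquiv (CoxeterMatrix.Aₙ n) ω (DW n a ++ (IW n b ++ x))) (hab : b ≤ a) :
    False := by
  have hpos := Nat.pos_of_ne_zero (NeZero.ne n)
  have hsplit := DW_split (n := n) (e := b) (a := a) hab
  have hIW : IW n b = ((b:ℕ):Fin n) :: seg n (b+1) (n-b-1) := by
    rw [IW]
    obtain ⟨k, hk⟩ : ∃ k, n - b = k + 1 := ⟨n - b - 1, by omega⟩
    conv_lhs => rw [hk, show k = n - b - 1 by omega, seg_cons]
  have hseg : seg n 0 b = seg n 0 (b-1) ++ [((b-1:ℕ) : Fin n)] := by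
    obtain ⟨k, hk⟩ : ∃ k, b = k + 1 := ⟨b - 1, by omega⟩
    conv_lhs => rw [hk, show k = b - 1 by omega, seg_concat]
    simp
  rw [hsplit, hIW, hseg] at hc
  refine braid_interval cs hu hr (l := (seg n (b+1) (a-b)).reverse)
    (D₁ := []) (D₂ := (seg n 0 (b-1)).reverse)
    (r := seg n (b+1) (n-b-1) ++ x) (a := ((b:ℕ):Fin n))
    (b := ((b-1:ℕ):Fin n)) ?_ ?_ (by simp) ?_
  · simpa [List.append_assoc, List.cons_append, List.reverse_append] using hc
  · exact An_three (Or.inr (by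
      rw [Fin.val_cast_of_lt (by omega : b - 1 < n), Fin.val_cast_of_lt (by omega : b < n)]
      omega))
  · intro d hd
    rw [List.mem_reverse] at hd
    have := mem_seg (by omega) hd
    refine An_two (Or.inr ?_)
    rw [Fin.val_cast_of_lt (by omega : b < n)]
    omega

theorem decW_map (a : ℕ) :
    (decW (a+1) 1).map (fun k => ((k-1:ℕ) : Fin n)) = DW n a := by
  rw [decW, DW, show a + 1 + 1 - 1 = a + 1 by omega]
  rw [List.map_reverse]
  congr 1
  rw [seg, show (fun k => ((k-1:ℕ) : Fin n)) = (Nat.cast ∘ (fun k => k - 1)) from rfl,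
    ← List.map_map, map_sub_one_range' (a+1) 0]

theorem incW_map (b : ℕ) (hb : b < n) :
    (incW (b+1) n).map (fun k => ((k-1:ℕ) : Fin n)) = IW n b := by
  rw [incW, IW, show n + 1 - (b+1) = n - b by omega]
  rw [seg, show (fun k => ((k-1:ℕ) : Fin n)) = (Nat.cast ∘ (fun k => k - 1)) from rfl,
    ← List.map_map, map_sub_one_range' (n-b) b]

theorem decWn_map :
    (decW n 1).map (fun k => ((k-1:ℕ) : Fin n)) = DW n (n-1) := by
  have hpos := Nat.pos_of_ne_zero (NeZero.ne n)
  have := decW_map (n := n) (n-1)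
  rw [show (n-1) + 1 = n by omega] at this
  exact this

end FullFCAux

open FullFCAux in
/-- Every full fully commutative element `u` of `W(Aₙ)` other than `σₙ σₙ₋₁ ⋯ σ₁` has a
reduced expression `σᵢ ⋯ σ₂ σ₁ · σᵣ ⋯ σₙ₋₁ σₙ · x` with `1 ≤ i ≤ n-1`, `1 ≤ r ≤ n`,
`i < r`, and `x` empty or supported in `{σ₂, …, σₙ₋₁}`.  The (1-based) subscript `k`
corresponds to the generator `k - 1 : Fin n`. -/
theorem full_fc_form (n : ℕ) [NeZero n] {W : Type*} [Group W]
    (cs : CoxeterSystem (CoxeterMatrix.Aₙ n) W) (u : W) (hu : IsFC cs u)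
    (hfull : ∃ ω, IsRedexOf cs ω u ∧ ((0 : ℕ) : Fin n) ∈ ω ∧ ((n - 1 : ℕ) : Fin n) ∈ ω)
    (hne : u ≠ cs.wordProd ((decW n 1).map fun k => ((k - 1 : ℕ) : Fin n))) :
    ∃ (i r : ℕ) (x : List ℕ), 1 ≤ i ∧ i ≤ n - 1 ∧ 1 ≤ r ∧ r ≤ n ∧ i < r ∧
      (∀ k ∈ x, 2 ≤ k ∧ k ≤ n - 1) ∧
      IsRedexOf cs ((decW i 1 ++ incW r n ++ x).map fun k => ((k - 1 : ℕ) : Fin n)) u := by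
  obtain ⟨ω, hred, h0, hl⟩ := hfull
  obtain ⟨a, Q, han, hcq, hQ0⟩ := normC hu hred h0
  by_cases han1 : a + 1 < n
  · have hlv : (((n-1:ℕ):Fin n) : ℕ) = n - 1 := Fin.val_cast_of_lt (by omega)
    have hlstQ : ((n-1:ℕ):Fin n) ∈ Q := by
      have hmem : ((n-1:ℕ):Fin n) ∈ DW n a ++ Q := ((commEquiv_perm hcq).mem_iff).mp hl
      rcases List.mem_append.mp hmem with h | h
      · exfalso
        have := mem_DW_val (by omega) h
        omega
      · exact h
    obtain ⟨b, x, hb1, hbn, hc2, hx0, hxl⟩ := normE hu hred han1 hcq hQ0 hlstQ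
    have hab : a < b := by
      by_contra h
      exact a_lt_b hu hred hb1 hbn hc2 (by omega)
    refine ⟨a+1, b+1, x.map (fun c : Fin n => (c:ℕ)+1), by omega, by omega, by omega, by omega,
      by omega, ?_, ?_⟩
    · intro k hk
      obtain ⟨c, hcx, rfl⟩ := List.mem_map.mp hk
      have h1 := val_ge_one (n := n) (c := c) (fun h => hx0 (h ▸ hcx))
      have h2 := val_le_sub_two (n := n) (c := c) (fun h => hxl (h ▸ hcx))
      omega
    · have hxm : (x.map (fun c : Fin n => (c:ℕ)+1)).map (fun k => ((k-1:ℕ) : Fin n)) = x := by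
        rw [List.map_map]
        rw [show ((fun k => ((k-1:ℕ) : Fin n)) ∘ (fun c : Fin n => (c:ℕ)+1))
            = (fun c : Fin n => ((((c:ℕ)+1)-1 : ℕ) : Fin n)) from rfl]
        simp [Fin.cast_val_eq_self]
      have hw : ((decW (a+1) 1 ++ incW (b+1) n ++ x.map (fun c : Fin n => ((c:ℕ)+1))).map
          (fun k => ((k-1:ℕ) : Fin n))) = DW n a ++ (IW n b ++ x) := by
        simp only [List.map_append]
        rw [decW_map, incW_map b (by omega), hxm, List.append_assoc]
      have hfin := commEquiv_redex cs hred hc2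
      rw [← hw] at hfin
      exact hfin
  · exfalso
    have haeq : a = n - 1 := by omega
    rw [haeq] at hcq
    have hQnil := Qnil hu hred hcq hQ0
    rw [hQnil, List.append_nil] at hcq
    apply hne
    rw [← hred.1, decWn_map]
    exact commEquiv_wordProd cs hcq
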